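/- Let 𝒩 be a measurable normed space, i.e. a real normed space with its Borel σ-algebra such that addition is measurable with respect to the product σ-algebra Borel(𝒩)⊗Borel(𝒩). Let κ be the density of 𝒩, i.e. the smallest cardinal of a dense subset of 𝒩, and let S be any set of cardinality κ. Then the product of the full power-set σ-algebras on S equals the full power-set σ-algebra on S × S: 𝔓(S × S) = 𝔓(S) ⊗ 𝔓(S), i.e. every subset of S × S belongs to the σ-algebra generated by rectangles A × B with A, B ⊆ S. -/
import Mathlib


open MeasureTheory Topology

noncomputable section

/-- The density of a topological space: the smallest cardinality of a dense subset. -/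
def density (N : Type*) [TopologicalSpace N] : Cardinal :=
  ⨅ D : {D : Set N // Dense D}, Cardinal.mk D.1

/-- A uniformly separated set in a metric space is closed. -/
private lemma aux_isClosed_of_sep {α : Type*} [MetricSpace α] {Y : Set α} {ε : ℝ}
    (hε : 0 < ε) (h : ∀ x ∈ Y, ∀ y ∈ Y, x ≠ y → ε ≤ dist x y) : IsClosed Y := by
  rw [← isOpen_compl_iff, Metric.isOpen_iff]
  intro x hx
  by_cases hmeet : ∃ y ∈ Y, dist x y < ε / 2
  · obtain ⟨y, hy, hxy⟩ := hmeet
    have hxney : x ≠ y := fun h' => hx (h' ▸ hy)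
    have hdpos : 0 < dist x y := dist_pos.mpr hxney
    refine ⟨min (ε / 2) (dist x y), lt_min (by positivity) hdpos, ?_⟩
    intro z hz hzY
    rw [Metric.mem_ball] at hz
    have hzx : dist z x < min (ε / 2) (dist x y) := hz
    have hzy : z ≠ y := by
      intro h'
      subst h'
      have := lt_of_lt_of_le hzx (min_le_right _ _)
      rw [dist_comm] at this
      exact lt_irrefl _ this
    have : dist z y < ε := by
      have h1 : dist z x < ε / 2 := lt_of_lt_of_le hzx (min_le_left _ _)
      calc dist z y ≤ dist z x + dist x y := dist_triangle _ _ _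
        _ < ε / 2 + ε / 2 := by linarith
        _ = ε := by ring
    exact absurd this (not_lt.mpr (h z hzY y hy hzy))
  · refine ⟨ε / 2, by positivity, ?_⟩
    intro z hz hzY
    rw [Metric.mem_ball] at hz
    exact hmeet ⟨z, hzY, by rw [dist_comm]; exact hz⟩

/-- Existence of a maximal `ε`-separated subset of `B`, which is then an `ε`-net of `B`. -/
private lemma aux_exists_net {α : Type*} [MetricSpace α] (B : Set α) {ε : ℝ} (hε : 0 < ε) :
    ∃ Y : Set α, Y ⊆ B ∧ (∀ x ∈ Y, ∀ y ∈ Y, x ≠ y → ε ≤ dist x y) ∧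
      ∀ x ∈ B, ∃ y ∈ Y, dist x y < ε := by
  set 𝒮 : Set (Set α) := {Y | Y ⊆ B ∧ ∀ x ∈ Y, ∀ y ∈ Y, x ≠ y → ε ≤ dist x y} with h𝒮
  obtain ⟨m, hm⟩ := zorn_subset 𝒮 (by
    intro c hc hchain
    refine ⟨⋃₀ c, ⟨Set.sUnion_subset fun s hs => (hc hs).1, ?_⟩, fun s hs => Set.subset_sUnion_of_mem hs⟩
    intro x hx y hy hxy
    obtain ⟨s, hs, hxs⟩ := hx
    obtain ⟨t, ht, hyt⟩ := hy
    rcases eq_or_ne s t with rfl | hst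
    · exact (hc hs).2 x hxs y hyt hxy
    · rcases hchain hs ht hst with hsub | hsub
      · exact (hc ht).2 x (hsub hxs) y hyt hxy
      · exact (hc hs).2 x hxs y (hsub hyt) hxy)
  refine ⟨m, hm.prop.1, hm.prop.2, ?_⟩
  intro x hxB
  by_cases hxm : x ∈ m
  · exact ⟨x, hxm, by simpa using hε⟩
  · by_contra hno
    push_neg at hno
    have hins : insert x m ∈ 𝒮 := by
      constructor
      · exact Set.insert_subset hxB hm.prop.1
      · intro a ha b hb hab
        rcases ha with rfl | ha <;> rcases hb with rfl | hb
        · exact absurd rfl hab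
        · exact hno b hb
        · rw [dist_comm]; exact hno a ha
        · exact hm.prop.2 a ha b hb hab
    have := hm.2 hins (Set.subset_insert x m)
    exact hxm (this (Set.mem_insert x m))

/-- Core combinatorial step: if `Y₁, Y₂` are separated sets, `Y₂` bounded, then every subset of
`Y₁ ×ˢ Y₂` is in the product σ-algebra `Borel ⊗ Borel`, using measurability of addition. -/
private lemma aux_core {N : Type u} [NormedAddCommGroup N] [NormedSpace ℝ N]
    [MeasurableSpace N] [BorelSpace N]
    (hadd : Measurable fun p : N × N => p.1 + p.2)
    {Y₁ Y₂ : Set N} {ε1 ε2 R : ℝ} (hε1 : 0 < ε1) (hε2 : 0 < ε2) (hR : 0 < R)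
    (hY₁ : ∀ x ∈ Y₁, ∀ y ∈ Y₁, x ≠ y → ε1 ≤ dist x y)
    (hY₂ : ∀ x ∈ Y₂, ∀ y ∈ Y₂, x ≠ y → ε2 ≤ dist x y)
    (hY₂B : ∀ x ∈ Y₂, ‖x‖ ≤ R)
    {T : Set (N × N)} (hT : T ⊆ Y₁ ×ˢ Y₂) : MeasurableSet T := by
  have hRne : R ≠ 0 := hR.ne'
  set δ : ℝ := ε1 / (4 * R) with hδdef
  have hδ : 0 < δ := by rw [hδdef]; positivity
  set ζ : ℝ := min (ε1 / 2) (δ * ε2) with hζdef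
  have hζ : 0 < ζ := lt_min (by positivity) (by positivity)
  set f : N × N → N := fun p => p.1 + δ • p.2 with hfdef
  have hf : Measurable f := by
    have h1 : Measurable fun p : N × N => (p.1, δ • p.2) :=
      measurable_fst.prodMk ((continuous_const_smul δ).measurable.comp measurable_snd)
    exact hadd.comp h1
  have key : ∀ p ∈ Y₁ ×ˢ Y₂, ∀ q ∈ Y₁ ×ˢ Y₂, p ≠ q → ζ ≤ dist (f p) (f q) := by
    rintro ⟨a, b⟩ ⟨ha, hb⟩ ⟨c, d⟩ ⟨hc, hd⟩ hpq
    have hbd : ‖b - d‖ ≤ 2 * R := by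
      have h1 := hY₂B b hb
      have h2 := hY₂B d hd
      calc ‖b - d‖ ≤ ‖b‖ + ‖d‖ := norm_sub_le _ _
        _ ≤ 2 * R := by linarith
    have hfd : dist (f (a, b)) (f (c, d)) = ‖(a - c) + δ • (b - d)‖ := by
      simp only [hfdef, dist_eq_norm]
      congr 1
      rw [smul_sub]
      abel
    by_cases hac : a = c
    · have hbd' : b ≠ d := by
        intro h
        exact hpq (by rw [hac, h])
      have heq : dist (f (a, b)) (f (c, d)) = δ * ‖b - d‖ := by
        rw [hfd, hac, sub_self, zero_add, norm_smul, Real.norm_eq_abs, abs_of_pos hδ]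
      have h2 : ε2 ≤ ‖b - d‖ := by rw [← dist_eq_norm]; exact hY₂ b hb d hd hbd'
      rw [heq]
      exact le_trans (min_le_right _ _) (by nlinarith)
    · have h1 : ε1 ≤ ‖a - c‖ := by rw [← dist_eq_norm]; exact hY₁ a ha c hc hac
      have h4 : ‖δ • (b - d)‖ = δ * ‖b - d‖ := by
        rw [norm_smul, Real.norm_eq_abs, abs_of_pos hδ]
      have h3 : ‖a - c‖ - ‖δ • (b - d)‖ ≤ ‖(a - c) + δ • (b - d)‖ := by
        have := norm_add_le ((a - c) + δ • (b - d)) (-(δ • (b - d)))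
        simp only [add_neg_cancel_right, norm_neg] at this
        linarith
      have h5 : δ * ‖b - d‖ ≤ ε1 / 2 := by
        have hδR : δ * (2 * R) = ε1 / 2 := by rw [hδdef]; field_simp; ring
        nlinarith
      rw [hfd]
      refine le_trans (min_le_left _ _) ?_
      rw [h4] at h3
      linarith
  set E : Set N := f '' T with hEdef
  have hEsep : ∀ x ∈ E, ∀ y ∈ E, x ≠ y → ζ ≤ dist x y := by
    rintro x ⟨p, hp, rfl⟩ y ⟨q, hq, rfl⟩ hxy
    exact key p (hT hp) q (hT hq) (fun h => hxy (by rw [h]))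
  have hEclosed : IsClosed E := aux_isClosed_of_sep hζ hEsep
  have hEq : T = f ⁻¹' E ∩ (Y₁ ×ˢ Y₂) := by
    apply Set.Subset.antisymm
    · intro p hp
      exact ⟨Set.mem_image_of_mem f hp, hT hp⟩
    · rintro p ⟨hpE, hpY⟩
      obtain ⟨q, hq, hfq⟩ := hpE
      have hqp : q = p := by
        by_contra hne
        have h0 := key q (hT hq) p hpY hne
        rw [hfq, dist_self] at h0
        linarith
      rwa [← hqp]
  rw [hEq]
  have hY₁c : IsClosed Y₁ := aux_isClosed_of_sep hε1 hY₁
  have hY₂c : IsClosed Y₂ := aux_isClosed_of_sep hε2 hY₂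
  exact (hf hEclosed.measurableSet).inter (hY₁c.measurableSet.prod hY₂c.measurableSet)

/-- If `𝒩` is a measurable normed space (a real normed space with its Borel σ-algebra, such
that addition is measurable for the product σ-algebra `Borel ⊗ Borel`) and `κ` is its density,
then for any set `S` of cardinality `κ` the product of the full power-set σ-algebras on `S`
is the full power-set σ-algebra on `S × S`: every subset of `S × S` is measurable for the
σ-algebra generated by the rectangles. -/
theorem stmt13 {N : Type u} [NormedAddCommGroup N] [NormedSpace ℝ N]
    [MeasurableSpace N] [BorelSpace N]
    (hadd : Measurable fun p : N × N => p.1 + p.2)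
    {S : Type u} (hS : Cardinal.mk S = density N) :
    ∀ T : Set (S × S), MeasurableSet[@Prod.instMeasurableSpace S S ⊤ ⊤] T := by
  classical
  have hεpos : ∀ n : ℕ, (0 : ℝ) < 1 / (n + 1) := fun n => by positivity
  have hnets : ∀ n : ℕ, ∃ Y : Set N, Y ⊆ Metric.closedBall 0 (n + 1) ∧
      (∀ x ∈ Y, ∀ y ∈ Y, x ≠ y → (1 : ℝ) / (n + 1) ≤ dist x y) ∧
      ∀ x ∈ Metric.closedBall 0 (n + 1), ∃ y ∈ Y, dist x y < 1 / (n + 1) :=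
    fun n => aux_exists_net _ (hεpos n)
  choose Y hYB hYsep hYnet using hnets
  set D : Set N := ⋃ n, Y n with hDdef
  have hDdense : Dense D := by
    rw [Metric.dense_iff]
    intro x r hr
    obtain ⟨n, hn⟩ := exists_nat_gt (max ‖x‖ (1 / r))
    have hn1 : ‖x‖ ≤ (n : ℝ) + 1 :=
      le_of_lt (lt_of_le_of_lt (le_max_left _ _) (lt_of_lt_of_le hn (by linarith)))
    have hn2 : (1 : ℝ) / (n + 1) < r := by
      have h1 : (1 : ℝ) / r < n + 1 := lt_of_le_of_lt (le_max_right _ _) (lt_of_lt_of_le hn (by linarith))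
      have h2 : (1 : ℝ) < (n + 1) * r := by
        have := (div_lt_iff₀ hr).mp h1
        linarith
      rw [div_lt_iff₀ (by positivity : (0 : ℝ) < (n : ℝ) + 1)]
      linarith [mul_comm ((n : ℝ) + 1) r]
    have hxB : x ∈ Metric.closedBall (0 : N) (n + 1) := by
      rw [Metric.mem_closedBall, dist_zero_right]
      exact hn1
    obtain ⟨y, hy, hxy⟩ := hYnet n x hxB
    exact ⟨y, Metric.mem_ball.mpr (by rw [dist_comm]; linarith),
      Set.mem_iUnion.mpr ⟨n, hy⟩⟩
  have hle : Cardinal.mk S ≤ Cardinal.mk D := by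
    rw [hS]
    exact ciInf_le' (fun D : {D : Set N // Dense D} => Cardinal.mk D.1) ⟨D, hDdense⟩
  obtain ⟨e⟩ := (Cardinal.le_def _ _).mp hle
  set g : S → N := fun s => (e s : N) with hgdef
  have hginj : Function.Injective g := fun a b hab => e.injective (Subtype.ext hab)
  have hgD : ∀ s, g s ∈ D := fun s => (e s).2
  have core : ∀ n m : ℕ, ∀ T : Set (N × N), T ⊆ Y n ×ˢ Y m → MeasurableSet T := by
    intro n m T hT
    refine aux_core hadd (hεpos n) (hεpos m)
      (by positivity : (0 : ℝ) < (m : ℝ) + 1) (hYsep n) (hYsep m) ?_ hT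
    intro x hx
    exact mem_closedBall_zero_iff.mp (hYB m hx)
  have all : ∀ T : Set (N × N), T ⊆ D ×ˢ D → MeasurableSet T := by
    intro T hT
    have hTeq : T = ⋃ n, ⋃ m, T ∩ (Y n ×ˢ Y m) := by
      ext p
      constructor
      · intro hp
        obtain ⟨hp1, hp2⟩ := hT hp
        obtain ⟨n, hn⟩ := Set.mem_iUnion.mp hp1
        obtain ⟨m, hm⟩ := Set.mem_iUnion.mp hp2
        exact Set.mem_iUnion.mpr ⟨n, Set.mem_iUnion.mpr
          ⟨m, hp, Set.mem_prod.mpr ⟨hn, hm⟩⟩⟩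
      · intro hp
        simp only [Set.mem_iUnion] at hp
        obtain ⟨n, m, hp, _⟩ := hp
        exact hp
    rw [hTeq]
    exact MeasurableSet.iUnion fun n => MeasurableSet.iUnion fun m =>
      core n m _ Set.inter_subset_right
  intro T
  letI : MeasurableSpace S := ⊤
  set G : S × S → N × N := fun p => (g p.1, g p.2) with hGdef
  have hGmeas : Measurable G := by
    apply Measurable.prodMk
    · exact (measurable_from_top (f := g)).comp measurable_fst
    · exact (measurable_from_top (f := g)).comp measurable_snd
  have hGinj : Function.Injective G := by
    rintro ⟨a, b⟩ ⟨c, d⟩ h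
    simp only [hGdef, Prod.mk.injEq] at h
    exact Prod.ext (hginj h.1) (hginj h.2)
  have himg : G '' T ⊆ D ×ˢ D := by
    rintro _ ⟨p, -, rfl⟩
    exact Set.mem_prod.mpr ⟨hgD _, hgD _⟩
  have hE := all (G '' T) himg
  have hTeq : T = G ⁻¹' (G '' T) := (hGinj.preimage_image T).symm
  rw [hTeq]
  exact hGmeas hE

end
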